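/- Let r ≥ 1 and let M be a simple a_r-module such that T_r : M → M is injective. Then for every α ∈ ℂ, the module N(M,α) is simple: the only subspaces W ⊆ N(M,α) with D_m W ⊆ W for all m ∈ ℤ are 0 and N(M,α). -/
import Mathlib


open Finsupp

variable {M : Type*} [AddCommGroup M] [Module ℂ M]

/-- `(M, T)` is an `a_r`-module: `M` carries operators `T_0, …, T_r` with
`T_i∘T_j − T_j∘T_i = (j−i)·T_{i+j}` for `i+j ≤ r` and `T_i∘T_j = T_j∘T_i` for `i+j > r`. -/
def IsArModule (r : ℕ) (T : ℕ → Module.End ℂ M) : Prop :=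
  (∀ i j, i ≤ r → j ≤ r → i + j ≤ r →
      T i ∘ₗ T j - T j ∘ₗ T i = (((j : ℂ) - (i : ℂ)) • T (i + j))) ∧
  (∀ i j, i ≤ r → j ≤ r → r < i + j → T i ∘ₗ T j = T j ∘ₗ T i)

/-- A subspace `U ⊆ M` is an `a_r`-submodule if `T_i U ⊆ U` for all `0 ≤ i ≤ r`. -/
def IsArSubmodule (r : ℕ) (T : ℕ → Module.End ℂ M) (U : Submodule ℂ M) : Prop :=
  ∀ i ≤ r, ∀ v ∈ U, T i v ∈ U

/-- `M` is a simple `a_r`-module: nonzero, and the only `a_r`-submodules are `0` and `M`. -/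
def IsSimpleArModule (r : ℕ) (T : ℕ → Module.End ℂ M) : Prop :=
  (∃ v : M, v ≠ 0) ∧
    ∀ U : Submodule ℂ M, IsArSubmodule r T U → U = ⊥ ∨ U = ⊤

/-- The operator `D_m` on `N(M, α) = ⊕_{n ∈ ℤ} M ⊗ t^n` (finitely supported functions `ℤ → M`,
with `v ⊗ t^n` the function `Finsupp.single n v`), given by
`D_m (v ⊗ t^n) = ((α+n)•v + Σ_{i=0}^r (m^{i+1}/(i+1)!) • T_i v) ⊗ t^{n+m}`. -/
noncomputable def Dop (r : ℕ) (T : ℕ → Module.End ℂ M) (α : ℂ) (m : ℤ) :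
    (ℤ →₀ M) →ₗ[ℂ] (ℤ →₀ M) :=
  Finsupp.lsum ℂ fun n : ℤ =>
    (Finsupp.lsingle (n + m) : M →ₗ[ℂ] ℤ →₀ M) ∘ₗ
      ((α + (n : ℂ)) • (LinearMap.id : M →ₗ[ℂ] M) +
        ∑ i ∈ Finset.range (r + 1),
          ((m : ℂ) ^ (i + 1) / (Nat.factorial (i + 1) : ℂ)) • (T i : M →ₗ[ℂ] M))

/-- The operator `ω^{(s)}_{l,m} = Σ_{i=0}^s binom(s,i)·(−1)^{s−i}·D_{l−m−i}∘D_{m+i}`. -/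
noncomputable def omegaOp (r : ℕ) (T : ℕ → Module.End ℂ M) (α : ℂ) (s : ℕ) (l m : ℤ) :
    (ℤ →₀ M) →ₗ[ℂ] (ℤ →₀ M) :=
  ∑ i ∈ Finset.range (s + 1),
    ((s.choose i : ℂ) * (-1) ^ (s - i)) •
      (Dop r T α (l - m - (i : ℤ)) ∘ₗ Dop r T α (m + (i : ℤ)))

open Polynomial in
lemma Dop_single (r : ℕ) (T : ℕ → Module.End ℂ M) (α : ℂ) (m n : ℤ) (v : M) :
    Dop r T α m (Finsupp.single n v) =
      Finsupp.single (n + m)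
        ((α + (n:ℂ)) • v + ∑ i ∈ Finset.range (r+1),
          ((m:ℂ)^(i+1) / ((Nat.factorial (i+1)) : ℂ)) • T i v) := by
  rw [Dop, Finsupp.lsum_single]
  simp [Finsupp.lsingle, LinearMap.sum_apply]

lemma Dop_zero_apply (r : ℕ) (T : ℕ → Module.End ℂ M) (α : ℂ) (w : ℤ →₀ M) (n : ℤ) :
    Dop r T α 0 w n = (α + (n:ℂ)) • w n := by
  rw [Dop, Finsupp.lsum_apply, Finsupp.sum_apply, Finsupp.sum]
  have h1 : ∀ k ∈ w.support,
      ((Finsupp.lsingle (k + 0) ∘ₗ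
        ((α + (k : ℂ)) • (LinearMap.id : M →ₗ[ℂ] M) +
        ∑ i ∈ Finset.range (r + 1),
          (((0:ℤ) : ℂ) ^ (i + 1) / (Nat.factorial (i + 1) : ℂ)) • (T i : M →ₗ[ℂ] M))) (w k)) n
      = if k = n then (α + (k:ℂ)) • w k else 0 := by
    intro k _
    simp [Finsupp.single_apply]
  rw [Finset.sum_congr rfl h1, Finset.sum_ite_eq' w.support n (fun k => (α + (k:ℂ)) • w k)]
  by_cases h : n ∈ w.support
  · simp [h]
  · rw [if_neg h, Finsupp.notMem_support_iff.mp h]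
    simp

lemma alt_sum_succ (s : ℕ) (f : ℕ → ℂ) :
    ∑ i ∈ Finset.range (s+2), ((-1:ℂ)^i * ((s+1).choose i)) * f i
      = ∑ i ∈ Finset.range (s+1), ((-1:ℂ)^i * (s.choose i)) * (f i - f (i+1)) := by
  set X := ∑ i ∈ Finset.range (s+1), ((-1:ℂ)^i * (s.choose i)) * f (i+1) with hX
  set Y := ∑ i ∈ Finset.range (s+1), ((-1:ℂ)^i * (s.choose (i+1))) * f (i+1) with hY
  have hA : ∑ i ∈ Finset.range (s+2), ((-1:ℂ)^i * ((s+1).choose i)) * f i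
      = -X - Y + f 0 := by
    rw [Finset.sum_range_succ' (fun i => ((-1:ℂ)^i * ((s+1).choose i)) * f i) (s+1)]
    have h1 : ∀ i ∈ Finset.range (s+1), ((-1:ℂ)^(i+1) * ((s+1).choose (i+1))) * f (i+1)
        = -(((-1:ℂ)^i * (s.choose i)) * f (i+1)) - ((-1:ℂ)^i * (s.choose (i+1))) * f (i+1) := by
      intro i _
      rw [Nat.choose_succ_succ]
      push_cast
      ring
    rw [Finset.sum_congr rfl h1, Finset.sum_sub_distrib, Finset.sum_neg_distrib]
    simp [hX, hY]

  have hYs : Y = ∑ i ∈ Finset.range s, ((-1:ℂ)^i * (s.choose (i+1))) * f (i+1) := by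
    rw [hY, Finset.sum_range_succ, Nat.choose_succ_self]
    simp
  have hB : ∑ i ∈ Finset.range (s+1), ((-1:ℂ)^i * (s.choose i)) * f i = f 0 - Y := by
    rw [Finset.sum_range_succ' (fun i => ((-1:ℂ)^i * (s.choose i)) * f i) s, hYs]
    have h2 : ∀ i ∈ Finset.range s, ((-1:ℂ)^(i+1) * (s.choose (i+1))) * f (i+1)
        = -(((-1:ℂ)^i * (s.choose (i+1))) * f (i+1)) := by
      intro i _; push_cast; ring
    rw [Finset.sum_congr rfl h2, Finset.sum_neg_distrib]
    simp
    ring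
  have : ∑ i ∈ Finset.range (s+1), ((-1:ℂ)^i * (s.choose i)) * (f i - f (i+1))
      = (∑ i ∈ Finset.range (s+1), ((-1:ℂ)^i * (s.choose i)) * f i) - X := by
    rw [hX, ← Finset.sum_sub_distrib]
    exact Finset.sum_congr rfl fun i _ => by ring
  rw [hA, this, hB]
  ring

lemma alt_sum_pow : ∀ s : ℕ, ∀ k, k ≤ s →
    ∑ i ∈ Finset.range (s+1), ((-1:ℂ)^i * (s.choose i)) * (i:ℂ)^k
      = if k = s then (-1:ℂ)^s * (Nat.factorial s : ℂ) else 0 := by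
  intro s
  induction s with
  | zero =>
    intro k hk
    interval_cases k
    simp
  | succ s ih =>
    intro k hk
    have key : ∑ i ∈ Finset.range (s+2), ((-1:ℂ)^i * ((s+1).choose i)) * (i:ℂ)^k
        = ∑ i ∈ Finset.range (s+1), ((-1:ℂ)^i * (s.choose i)) * ((i:ℂ)^k - ((i:ℂ)+1)^k) := by
      have := alt_sum_succ s (fun i => (i:ℂ)^k)
      simpa using this
    have expand : ∀ i : ℕ, (i:ℂ)^k - ((i:ℂ)+1)^k
        = ∑ j ∈ Finset.range k, -((i:ℂ)^j * (k.choose j)) := by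
      intro i
      have hb := add_pow (i:ℂ) 1 k
      rw [Finset.sum_range_succ] at hb
      simp only [one_pow, mul_one, Nat.choose_self, Nat.cast_one] at hb
      rw [hb]
      rw [Finset.sum_neg_distrib]
      ring
    rw [key, Finset.sum_congr rfl (fun i _ => by rw [expand i])]
    have swap : ∑ i ∈ Finset.range (s+1), ((-1:ℂ)^i * (s.choose i)) *
          (∑ j ∈ Finset.range k, -((i:ℂ)^j * (k.choose j)))
        = ∑ j ∈ Finset.range k, -((k.choose j : ℂ) *
            ∑ i ∈ Finset.range (s+1), ((-1:ℂ)^i * (s.choose i)) * (i:ℂ)^j) := by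
      simp only [Finset.mul_sum]
      rw [Finset.sum_comm]
      refine Finset.sum_congr rfl fun j _ => ?_
      rw [← Finset.sum_neg_distrib]
      refine Finset.sum_congr rfl fun i _ => ?_
      ring
    rw [swap]
    have hj : ∀ j ∈ Finset.range k, -((k.choose j : ℂ) *
          ∑ i ∈ Finset.range (s+1), ((-1:ℂ)^i * (s.choose i)) * (i:ℂ)^j)
        = if j = s then -((k.choose s : ℂ) * ((-1:ℂ)^s * (Nat.factorial s : ℂ))) else 0 := by
      intro j hjk
      have hjlt := Finset.mem_range.mp hjk
      rw [ih j (by omega)]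
      by_cases h : j = s
      · subst h; simp
      · simp [h]
    rw [Finset.sum_congr rfl hj, Finset.sum_ite_eq' (Finset.range k) s
        (fun _ => -((k.choose s : ℂ) * ((-1:ℂ)^s * (Nat.factorial s : ℂ))))]
    by_cases hk1 : k = s + 1
    · subst hk1
      rw [if_pos (by simp), if_pos rfl]
      rw [Nat.choose_succ_self_right]
      push_cast [Nat.factorial_succ]
      ring
    · have hks : k ≤ s := by omega
      rw [if_neg (by simp; omega), if_neg (by omega)]

lemma top_coeff_mem (U : Submodule ℂ M) (d : ℕ) (c : ℕ → M)
    (h : ∀ m : ℕ, ∑ k ∈ Finset.range (d+1), ((m:ℂ)^k) • c k ∈ U) : c d ∈ U := by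
  have hx : ∑ i ∈ Finset.range (d+1), ((-1:ℂ)^i * (d.choose i)) •
      (∑ k ∈ Finset.range (d+1), ((i:ℂ)^k) • c k) ∈ U :=
    Submodule.sum_mem U fun i _ => Submodule.smul_mem U _ (h i)
  have heq : ∑ i ∈ Finset.range (d+1), ((-1:ℂ)^i * (d.choose i)) •
      (∑ k ∈ Finset.range (d+1), ((i:ℂ)^k) • c k)
      = ((-1:ℂ)^d * (Nat.factorial d : ℂ)) • c d := by
    have h1 : ∀ i ∈ Finset.range (d+1), ((-1:ℂ)^i * (d.choose i)) •
        (∑ k ∈ Finset.range (d+1), ((i:ℂ)^k) • c k)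
        = ∑ k ∈ Finset.range (d+1), (((-1:ℂ)^i * (d.choose i)) * (i:ℂ)^k) • c k := by
      intro i _
      rw [Finset.smul_sum]
      exact Finset.sum_congr rfl fun k _ => by rw [smul_smul]
    rw [Finset.sum_congr rfl h1, Finset.sum_comm]
    have h2 : ∀ k ∈ Finset.range (d+1),
        ∑ i ∈ Finset.range (d+1), (((-1:ℂ)^i * (d.choose i)) * (i:ℂ)^k) • c k
        = (if k = d then ((-1:ℂ)^d * (Nat.factorial d : ℂ)) else 0) • c k := by
      intro k hk
      rw [← Finset.sum_smul, alt_sum_pow d k (Nat.lt_succ_iff.mp (Finset.mem_range.mp hk))]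
    rw [Finset.sum_congr rfl h2]
    simp only [ite_smul, zero_smul]
    rw [Finset.sum_ite_eq' (Finset.range (d+1)) d
      (fun k => ((-1:ℂ)^d * (Nat.factorial d : ℂ)) • c k)]
    rw [if_pos (Finset.self_mem_range_succ d)]
  rw [heq] at hx
  have hne : ((-1:ℂ)^d * (Nat.factorial d : ℂ)) ≠ 0 := by
    apply mul_ne_zero
    · exact pow_ne_zero _ (by norm_num)
    · exact_mod_cast Nat.cast_ne_zero.mpr (Nat.factorial_ne_zero d)
  have := Submodule.smul_mem U (((-1:ℂ)^d * (Nat.factorial d : ℂ))⁻¹) hx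
  rwa [inv_smul_smul₀ hne] at this

lemma coeffs_mem (U : Submodule ℂ M) : ∀ d : ℕ, ∀ c : ℕ → M,
    (∀ m : ℕ, ∑ k ∈ Finset.range (d+1), ((m:ℂ)^k) • c k ∈ U) → ∀ k ≤ d, c k ∈ U := by
  intro d
  induction d with
  | zero =>
    intro c h k hk
    interval_cases k
    have := h 0
    simpa using this
  | succ d ih =>
    intro c h k hk
    have htop : c (d+1) ∈ U := top_coeff_mem U (d+1) c h
    have h' : ∀ m : ℕ, ∑ k ∈ Finset.range (d+1), ((m:ℂ)^k) • c k ∈ U := by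
      intro m
      have h2 := h m
      rw [Finset.sum_range_succ] at h2
      have := Submodule.sub_mem U h2 (Submodule.smul_mem U ((m:ℂ)^(d+1)) htop)
      simpa using this
    rcases Nat.lt_succ_iff_lt_or_eq.mp (Nat.lt_succ_of_le hk) with h3 | h3
    · exact ih c h' k (by omega)
    · rw [h3]; exact htop

lemma graded (r : ℕ) (T : ℕ → Module.End ℂ M) (α : ℂ) (W : Submodule ℂ (ℤ →₀ M))
    (hW : ∀ m : ℤ, ∀ w ∈ W, Dop r T α m w ∈ W) :
    ∀ w ∈ W, ∀ n : ℤ, Finsupp.single n (w n) ∈ W := by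
  suffices H : ∀ S : Finset ℤ, ∀ w ∈ W, w.support ⊆ S → ∀ n : ℤ, Finsupp.single n (w n) ∈ W by
    intro w hw n
    exact H w.support w hw (subset_refl _) n
  intro S
  induction S using Finset.induction_on with
  | empty =>
    intro w _ hsupp n
    have : w = 0 := Finsupp.support_eq_empty.mp (Finset.subset_empty.mp hsupp)
    simp [this]
  | @insert k S hkS ih =>
    intro w hw hsupp n
    set w' := Dop r T α 0 w - (α + (k:ℂ)) • w with hw'def
    have hw'W : w' ∈ W := Submodule.sub_mem W (hW 0 w hw) (Submodule.smul_mem W _ hw)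
    have hw'app : ∀ n : ℤ, w' n = ((n:ℂ) - (k:ℂ)) • w n := by
      intro n
      rw [hw'def]
      simp only [Finsupp.sub_apply, Finsupp.smul_apply, Dop_zero_apply]
      rw [← sub_smul]
      ring_nf
    have hsupp' : w'.support ⊆ S := by
      intro n hn
      have h1 : w' n ≠ 0 := Finsupp.mem_support_iff.mp hn
      rw [hw'app] at h1
      have h2 : w n ≠ 0 := by intro h; rw [h, smul_zero] at h1; exact h1 rfl
      have h3 : n ≠ k := by
        intro h; subst h; rw [sub_self, zero_smul] at h1; exact h1 rfl
      have := hsupp (Finsupp.mem_support_iff.mpr h2)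
      rcases Finset.mem_insert.mp this with h | h
      · exact absurd h h3
      · exact h
    have hne : ∀ n : ℤ, n ≠ k → Finsupp.single n (w n) ∈ W := by
      intro n hnk
      have h1 := ih w' hw'W hsupp' n
      rw [hw'app] at h1
      rw [← Finsupp.smul_single] at h1
      have hnz : ((n:ℂ) - (k:ℂ)) ≠ 0 := by
        rw [sub_ne_zero]
        exact_mod_cast fun h => hnk (by exact_mod_cast h)
      have := Submodule.smul_mem W (((n:ℂ) - (k:ℂ))⁻¹) h1
      rwa [inv_smul_smul₀ hnz] at this
    by_cases hnk : n = k
    · subst hnk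
      have hkey : Finsupp.single n (w n)
          = w - ∑ j ∈ w.support.erase n, Finsupp.single j (w j) := by
        have hsum : ∑ j ∈ w.support, Finsupp.single j (w j) = w := by
          exact Finsupp.sum_single w
        by_cases hks : n ∈ w.support
        · rw [eq_sub_iff_add_eq,
            Finset.add_sum_erase w.support (fun j => Finsupp.single j (w j)) hks, hsum]
        · rw [Finset.erase_eq_of_notMem hks, hsum,
            Finsupp.notMem_support_iff.mp hks]
          simp
      rw [hkey]
      exact Submodule.sub_mem W hw (Submodule.sum_mem W fun j hj =>
        hne j (Finset.ne_of_mem_erase hj))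
    · exact hne n hnk

noncomputable def Fpoly (r : ℕ) (β L : ℂ) (j : ℕ) : Polynomial ℂ :=
  if j ≤ r then Polynomial.C (((Nat.factorial (j+1)):ℂ)⁻¹) * (-(Polynomial.X - Polynomial.C L))^(j+1)
  else Polynomial.X + Polynomial.C β

noncomputable def Gpoly (r : ℕ) (β : ℂ) (j : ℕ) : Polynomial ℂ :=
  if j ≤ r then Polynomial.C (((Nat.factorial (j+1)):ℂ)⁻¹) * Polynomial.X^(j+1)
  else Polynomial.C β

noncomputable def SBop (r : ℕ) (T : ℕ → Module.End ℂ M) (j : ℕ) : Module.End ℂ M :=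
  if j ≤ r then T j else 1

noncomputable def uvec (r : ℕ) (T : ℕ → Module.End ℂ M) (v : M) (j : ℕ) : M :=
  if j ≤ r then T j v else v

lemma B_expand (r : ℕ) (T : ℕ → Module.End ℂ M) (β L z : ℂ) (w : M) :
    (β + z) • w + ∑ j ∈ Finset.range (r+1), ((L - z)^(j+1)/((Nat.factorial (j+1)):ℂ)) • T j w
      = ∑ j ∈ Finset.range (r+2), (Fpoly r β L j).eval z • (SBop r T j) w := by
  rw [Finset.sum_range_succ (fun j => (Fpoly r β L j).eval z • (SBop r T j) w) (r+1)]
  have h1 : Fpoly r β L (r+1) = Polynomial.X + Polynomial.C β := by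
    rw [Fpoly, if_neg (by omega)]
  have h2 : (SBop r T (r+1) : Module.End ℂ M) = 1 := by rw [SBop, if_neg (by omega)]
  rw [h1, h2]
  simp only [Polynomial.eval_add, Polynomial.eval_X, Polynomial.eval_C]
  rw [add_comm ((β + z) • w)]
  congr 1
  · refine Finset.sum_congr rfl fun j hj => ?_
    have hjr : j ≤ r := Nat.lt_succ_iff.mp (Finset.mem_range.mp hj)
    rw [Fpoly, if_pos hjr, SBop, if_pos hjr]
    simp only [Polynomial.eval_mul, Polynomial.eval_pow, Polynomial.eval_neg,
      Polynomial.eval_sub, Polynomial.eval_X, Polynomial.eval_C]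
    rw [div_eq_inv_mul]
    congr 2
    ring
  · rw [Module.End.one_apply, add_comm z β]

lemma G_expand (r : ℕ) (T : ℕ → Module.End ℂ M) (β z : ℂ) (v : M) :
    β • v + ∑ j ∈ Finset.range (r+1), (z^(j+1)/((Nat.factorial (j+1)):ℂ)) • T j v
      = ∑ j ∈ Finset.range (r+2), (Gpoly r β j).eval z • uvec r T v j := by
  rw [Finset.sum_range_succ (fun j => (Gpoly r β j).eval z • uvec r T v j) (r+1)]
  have h1 : Gpoly r β (r+1) = Polynomial.C β := by rw [Gpoly, if_neg (by omega)]
  have h2 : uvec r T v (r+1) = v := by rw [uvec, if_neg (by omega)]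
  rw [h1, h2, Polynomial.eval_C, add_comm (β • v)]
  congr 1
  refine Finset.sum_congr rfl fun j hj => ?_
  have hjr : j ≤ r := Nat.lt_succ_iff.mp (Finset.mem_range.mp hj)
  rw [Gpoly, if_pos hjr, uvec, if_pos hjr]
  simp only [Polynomial.eval_mul, Polynomial.eval_pow, Polynomial.eval_X, Polynomial.eval_C]
  rw [div_eq_inv_mul]

lemma Fpoly_deg_le (r : ℕ) (β L : ℂ) (j : ℕ) : (Fpoly r β L j).natDegree ≤ r+1 := by
  rw [Fpoly]
  split_ifs with h
  · refine Polynomial.natDegree_mul_le.trans ?_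
    simp only [Polynomial.natDegree_C, zero_add]
    refine Polynomial.natDegree_pow_le.trans ?_
    rw [Polynomial.natDegree_neg, Polynomial.natDegree_X_sub_C]
    omega
  · rw [Polynomial.natDegree_X_add_C]; omega

lemma Fpoly_deg_lt (r : ℕ) (hr : 1 ≤ r) (β L : ℂ) (j : ℕ) (hj : j ≠ r) :
    (Fpoly r β L j).natDegree ≤ r := by
  rw [Fpoly]
  split_ifs with h
  · refine Polynomial.natDegree_mul_le.trans ?_
    simp only [Polynomial.natDegree_C, zero_add]
    refine Polynomial.natDegree_pow_le.trans ?_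
    rw [Polynomial.natDegree_neg, Polynomial.natDegree_X_sub_C]
    omega
  · rw [Polynomial.natDegree_X_add_C]; omega

lemma Gpoly_deg_le (r : ℕ) (β : ℂ) (j : ℕ) : (Gpoly r β j).natDegree ≤ r+1 := by
  rw [Gpoly]
  split_ifs with h
  · refine Polynomial.natDegree_mul_le.trans ?_
    simp only [Polynomial.natDegree_C, zero_add, Polynomial.natDegree_X_pow]
    omega
  · simp

lemma Gpoly_deg_lt (r : ℕ) (β : ℂ) (j : ℕ) (hj : j ≠ r) : (Gpoly r β j).natDegree ≤ r := by
  rw [Gpoly]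
  split_ifs with h
  · refine Polynomial.natDegree_mul_le.trans ?_
    simp only [Polynomial.natDegree_C, zero_add, Polynomial.natDegree_X_pow]
    omega
  · simp

lemma fact_inv_ne (k : ℕ) : ((Nat.factorial k : ℂ))⁻¹ ≠ 0 := by
  apply inv_ne_zero
  exact_mod_cast Nat.factorial_ne_zero k

lemma Fpoly_r (r : ℕ) (β L : ℂ) :
    (Fpoly r β L r).natDegree = r+1 ∧
    (Fpoly r β L r).leadingCoeff = ((Nat.factorial (r+1):ℂ))⁻¹ * (-1)^(r+1) := by
  rw [Fpoly, if_pos le_rfl]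
  have hQ : (-(Polynomial.X - Polynomial.C L))^(r+1)
      = Polynomial.C ((-1:ℂ)^(r+1)) * (Polynomial.X - Polynomial.C L)^(r+1) := by
    rw [neg_pow]
    congr 1
    rw [map_pow, map_neg, map_one]
  rw [hQ, ← mul_assoc, ← Polynomial.C_mul]
  have hmon : ((Polynomial.X - Polynomial.C L)^(r+1)).Monic :=
    (Polynomial.monic_X_sub_C L).pow (r+1)
  have hdeg : ((Polynomial.X - Polynomial.C L)^(r+1)).natDegree = r+1 := by
    rw [(Polynomial.monic_X_sub_C L).natDegree_pow, Polynomial.natDegree_X_sub_C, mul_one]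
  have hc : (((Nat.factorial (r+1):ℂ))⁻¹ * (-1:ℂ)^(r+1)) ≠ 0 :=
    mul_ne_zero (fact_inv_ne _) (pow_ne_zero _ (by norm_num))
  constructor
  · rw [Polynomial.natDegree_C_mul hc, hdeg]
  · rw [Polynomial.leadingCoeff_mul, Polynomial.leadingCoeff_C, hmon.leadingCoeff, mul_one]

lemma Gpoly_r (r : ℕ) (β : ℂ) :
    (Gpoly r β r).natDegree = r+1 ∧
    (Gpoly r β r).leadingCoeff = ((Nat.factorial (r+1):ℂ))⁻¹ := by
  rw [Gpoly, if_pos le_rfl]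
  constructor
  · rw [Polynomial.natDegree_C_mul (fact_inv_ne _), Polynomial.natDegree_X_pow]
  · rw [Polynomial.leadingCoeff_C_mul_X_pow]

lemma key_step (r : ℕ) (hr : 1 ≤ r) (T : ℕ → Module.End ℂ M) (α : ℂ)
    (W : Submodule ℂ (ℤ →₀ M)) (hW : ∀ m : ℤ, ∀ w ∈ W, Dop r T α m w ∈ W)
    (n : ℤ) (v : M) (hv : Finsupp.single n v ∈ W) (N : ℤ) :
    Finsupp.single N (T r (T r v)) ∈ W := by
  set β : ℂ := α + (n:ℂ) with hβ
  set L : ℂ := (N:ℂ) - (n:ℂ) with hL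
  set c : ℕ → M := fun k => ∑ j ∈ Finset.range (r+2), ∑ j' ∈ Finset.range (r+2),
    ((Fpoly r β L j * Gpoly r β j').coeff k) • (SBop r T j) (uvec r T v j') with hc
  set U : Submodule ℂ (ℤ →₀ M) → Prop := fun _ => True with hU0  -- dummy, remove
  clear hU0 U
  -- membership of the evaluated family
  have hmem0 : ∀ m : ℤ, Finsupp.single N
      (∑ j ∈ Finset.range (r+2), (Fpoly r β L j).eval (m:ℂ) •
        (SBop r T j) (∑ j' ∈ Finset.range (r+2), (Gpoly r β j').eval (m:ℂ) • uvec r T v j'))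
      ∈ W := by
    intro m
    have h1 := hW m _ hv
    rw [Dop_single] at h1
    rw [show ((α + (n:ℂ)) • v + ∑ i ∈ Finset.range (r+1),
        ((m:ℂ)^(i+1) / ((Nat.factorial (i+1)) : ℂ)) • T i v)
        = ∑ j' ∈ Finset.range (r+2), (Gpoly r β j').eval (m:ℂ) • uvec r T v j' from
      G_expand r T β (m:ℂ) v] at h1
    have h2 := hW (N - (n+m)) _ h1
    rw [Dop_single] at h2
    rw [show (n+m) + (N - (n+m)) = N by ring] at h2
    have e1 : (α + (((n+m):ℤ):ℂ)) = β + (m:ℂ) := by rw [hβ]; push_cast; ring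
    have e2 : (((N - (n+m)):ℤ):ℂ) = L - (m:ℂ) := by rw [hL]; push_cast; ring
    rw [e1, e2, B_expand r T β L (m:ℂ)] at h2
    exact h2
  have hpoly : ∀ m : ℕ, ∑ k ∈ Finset.range (2*r+2+1), ((m:ℂ)^k) • c k
      ∈ W.comap (Finsupp.lsingle N : M →ₗ[ℂ] (ℤ →₀ M)) := by
    intro m
    have h3 := hmem0 (m : ℤ)
    have hcast : (((m:ℤ)):ℂ) = (m:ℂ) := by push_cast; ring
    rw [hcast] at h3
    have heq : (∑ j ∈ Finset.range (r+2), (Fpoly r β L j).eval (m:ℂ) •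
        (SBop r T j) (∑ j' ∈ Finset.range (r+2), (Gpoly r β j').eval (m:ℂ) • uvec r T v j'))
        = ∑ k ∈ Finset.range (2*r+2+1), ((m:ℂ)^k) • c k := by
      have E1 : ∀ j ∈ Finset.range (r+2), (Fpoly r β L j).eval (m:ℂ) •
          (SBop r T j) (∑ j' ∈ Finset.range (r+2), (Gpoly r β j').eval (m:ℂ) • uvec r T v j')
          = ∑ j' ∈ Finset.range (r+2),
              ∑ k ∈ Finset.range (2*r+2+1),
                (((Fpoly r β L j * Gpoly r β j').coeff k) * (m:ℂ)^k) •
                  (SBop r T j) (uvec r T v j') := by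
        intro j _
        rw [map_sum, Finset.smul_sum]
        refine Finset.sum_congr rfl fun j' _ => ?_
        rw [LinearMap.map_smul, smul_smul, ← Polynomial.eval_mul]
        have hdeg : (Fpoly r β L j * Gpoly r β j').natDegree < 2*r+2+1 := by
          have := Polynomial.natDegree_mul_le (p := Fpoly r β L j) (q := Gpoly r β j')
          have h1 := Fpoly_deg_le r β L j
          have h2 := Gpoly_deg_le r β j'
          omega
        rw [Polynomial.eval_eq_sum_range' hdeg, Finset.sum_smul]
      rw [Finset.sum_congr rfl E1]
      rw [Finset.sum_congr rfl (fun j (_ : j ∈ Finset.range (r+2)) =>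
        Finset.sum_comm (s := Finset.range (r+2)) (t := Finset.range (2*r+2+1))
          (f := fun j' k => (((Fpoly r β L j * Gpoly r β j').coeff k) * (m:ℂ)^k) •
            (SBop r T j) (uvec r T v j')))]
      rw [Finset.sum_comm]
      refine Finset.sum_congr rfl fun k _ => ?_
      simp only [hc]
      rw [Finset.smul_sum]
      refine Finset.sum_congr rfl fun j _ => ?_
      rw [Finset.smul_sum]
      refine Finset.sum_congr rfl fun j' _ => ?_
      rw [smul_smul, mul_comm]
    rw [heq] at h3
    exact Submodule.mem_comap.mpr (by rwa [Finsupp.lsingle_apply])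
  have hctop := top_coeff_mem _ (2*r+2) c hpoly
  have hcval : c (2*r+2) = ((((Nat.factorial (r+1):ℂ))⁻¹ * (-1)^(r+1)) *
      ((Nat.factorial (r+1):ℂ))⁻¹) • T r (T r v) := by
    simp only [hc]
    rw [Finset.sum_eq_single_of_mem r (Finset.mem_range.mpr (by omega))
      (fun j _ hjr => Finset.sum_eq_zero fun j' _ => by
        rw [Polynomial.coeff_eq_zero_of_natDegree_lt (by
          have h1 := Fpoly_deg_lt r hr β L j hjr
          have h2 := Gpoly_deg_le r β j'
          have h3 := Polynomial.natDegree_mul_le (p := Fpoly r β L j) (q := Gpoly r β j')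
          omega), zero_smul])]
    rw [Finset.sum_eq_single_of_mem r (Finset.mem_range.mpr (by omega))
      (fun j' _ hj'r => by
        rw [Polynomial.coeff_eq_zero_of_natDegree_lt (by
          have h1 := Fpoly_deg_le r β L
          have h2 := Gpoly_deg_lt r β j' hj'r
          have h3 := Polynomial.natDegree_mul_le (p := Fpoly r β L r) (q := Gpoly r β j')
          have h4 := h1 r
          omega), zero_smul])]
    have h2r : 2*r+2 = (Fpoly r β L r).natDegree + (Gpoly r β r).natDegree := by
      rw [(Fpoly_r r β L).1, (Gpoly_r r β).1]
      omega
    rw [h2r, Polynomial.coeff_mul_degree_add_degree, (Fpoly_r r β L).2, (Gpoly_r r β).2]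
    have hsb : (SBop r T r : Module.End ℂ M) = T r := by rw [SBop, if_pos le_rfl]
    have huv : uvec r T v r = T r v := by rw [uvec, if_pos le_rfl]
    rw [hsb, huv]
  have hscal : ((((Nat.factorial (r+1):ℂ))⁻¹ * (-1)^(r+1)) *
      ((Nat.factorial (r+1):ℂ))⁻¹) ≠ 0 :=
    mul_ne_zero (mul_ne_zero (fact_inv_ne _) (pow_ne_zero _ (by norm_num))) (fact_inv_ne _)
  rw [hcval] at hctop
  have := Submodule.smul_mem _ ((((Nat.factorial (r+1):ℂ))⁻¹ * (-1)^(r+1)) *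
      ((Nat.factorial (r+1):ℂ))⁻¹)⁻¹ hctop
  rw [inv_smul_smul₀ hscal] at this
  have h5 := Submodule.mem_comap.mp this
  rwa [Finsupp.lsingle_apply] at h5

lemma sub_step (r : ℕ) (T : ℕ → Module.End ℂ M) (α : ℂ)
    (W : Submodule ℂ (ℤ →₀ M)) (hW : ∀ m : ℤ, ∀ w ∈ W, Dop r T α m w ∈ W)
    (v : M) (hv : ∀ n : ℤ, Finsupp.single n v ∈ W)
    (i : ℕ) (hi : i ≤ r) (N : ℤ) : Finsupp.single N (T i v) ∈ W := by
  have hm : ∀ m : ℤ, Finsupp.single N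
      (∑ j ∈ Finset.range (r+1), ((m:ℂ)^(j+1) / ((Nat.factorial (j+1)) : ℂ)) • T j v) ∈ W := by
    intro m
    have h1 := hW m _ (hv (N - m))
    rw [Dop_single, show (N - m) + m = N by ring] at h1
    have h2 := Submodule.sub_mem W h1
      (Submodule.smul_mem W (α + ((N - m : ℤ):ℂ)) (hv N))
    rw [Finsupp.smul_single, ← Finsupp.single_sub, add_sub_cancel_left] at h2
    exact h2
  set cc : ℕ → M := fun k => if k = 0 then 0 else ((Nat.factorial k:ℂ))⁻¹ • T (k-1) v with hcc
  have hU : ∀ m : ℕ, ∑ k ∈ Finset.range (r+1+1), ((m:ℂ)^k) • cc k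
      ∈ W.comap (Finsupp.lsingle N : M →ₗ[ℂ] (ℤ →₀ M)) := by
    intro m
    have heq : ∑ k ∈ Finset.range (r+1+1), ((m:ℂ)^k) • cc k
        = ∑ j ∈ Finset.range (r+1), (((m:ℤ):ℂ)^(j+1) / ((Nat.factorial (j+1)) : ℂ)) • T j v := by
      rw [Finset.sum_range_succ' (fun k => ((m:ℂ)^k) • cc k) (r+1)]
      have hc0 : cc 0 = 0 := by simp [hcc]
      rw [hc0]
      simp only [smul_zero, add_zero]
      refine Finset.sum_congr rfl fun j _ => ?_
      have : cc (j+1) = ((Nat.factorial (j+1):ℂ))⁻¹ • T j v := by rw [hcc]; simp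
      rw [this, smul_smul]
      push_cast
      rw [div_eq_mul_inv]
    rw [heq]
    exact Submodule.mem_comap.mpr (by rw [Finsupp.lsingle_apply]; exact hm (m:ℤ))
  have hk := coeffs_mem _ (r+1) cc hU (i+1) (by omega)
  have hcc1 : cc (i+1) = ((Nat.factorial (i+1):ℂ))⁻¹ • T i v := by rw [hcc]; simp
  rw [hcc1] at hk
  have h6 := Submodule.smul_mem (W.comap (Finsupp.lsingle N : M →ₗ[ℂ] (ℤ →₀ M)))
    ((Nat.factorial (i+1):ℂ)) hk
  rw [smul_smul, mul_inv_cancel₀ (by exact_mod_cast Nat.factorial_ne_zero (i+1)), one_smul] at h6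
  have h7 := Submodule.mem_comap.mp h6
  rwa [Finsupp.lsingle_apply] at h7

/-- let `r ≥ 1` and `M` a simple `a_r`-module with `T_r` injective. Then for every
`α ∈ ℂ` the module `N(M,α)` is simple: the only subspaces `W` with `D_m W ⊆ W` for all `m ∈ ℤ`
are `0` and `N(M,α)`. -/
theorem N_simple (r : ℕ) (hr : 1 ≤ r) (T : ℕ → Module.End ℂ M)
    (hT : IsArModule r T) (hsimple : IsSimpleArModule r T)
    (hinj : Function.Injective (T r)) (α : ℂ)
    (W : Submodule ℂ (ℤ →₀ M)) (hW : ∀ m : ℤ, ∀ w ∈ W, Dop r T α m w ∈ W) :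
    W = ⊥ ∨ W = ⊤ := by
  by_cases hbot : W = ⊥
  · exact Or.inl hbot
  right
  obtain ⟨w, hw, hwne⟩ := Submodule.exists_mem_ne_zero_of_ne_bot hbot
  obtain ⟨n, hn⟩ := Finsupp.ne_iff.mp hwne
  rw [Finsupp.coe_zero, Pi.zero_apply] at hn
  have hsing : Finsupp.single n (w n) ∈ W := graded r T α W hW w hw n
  set U : Submodule ℂ M := ⨅ N : ℤ, W.comap (Finsupp.lsingle N : M →ₗ[ℂ] (ℤ →₀ M)) with hUdef
  have hmemU : ∀ v : M, v ∈ U ↔ ∀ N : ℤ, Finsupp.single N v ∈ W := by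
    intro v
    rw [hUdef, Submodule.mem_iInf]
    constructor
    · intro h N; have := h N; rwa [Submodule.mem_comap, Finsupp.lsingle_apply] at this
    · intro h N; rw [Submodule.mem_comap, Finsupp.lsingle_apply]; exact h N
  have hTT : T r (T r (w n)) ∈ U := by
    rw [hmemU]
    intro N
    exact key_step r hr T α W hW n (w n) hsing N
  have hUsub : IsArSubmodule r T U := by
    intro i hi v hv
    rw [hmemU] at hv ⊢
    intro N
    exact sub_step r T α W hW v hv i hi N
  have hUne : U ≠ ⊥ := by
    intro h
    rw [h, Submodule.mem_bot] at hTT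
    have h1 : T r (w n) = 0 := hinj (by rw [hTT, map_zero])
    have h2 : w n = 0 := hinj (by rw [h1, map_zero])
    exact hn h2
  rcases hsimple.2 U hUsub with h | h
  · exact absurd h hUne
  have hall : ∀ v : M, ∀ N : ℤ, Finsupp.single N v ∈ W := by
    intro v N
    have : v ∈ U := by rw [h]; trivial
    exact (hmemU v).mp this N
  rw [eq_top_iff]
  intro x _
  rw [← Finsupp.sum_single x]
  exact Submodule.sum_mem W fun j _ => hall (x j) j
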